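/- (Bretagnolle–Huber inequality.) Let P and Q be probability distributions on a finite set X with the support of P contained in the support of Q. Then d_TV(P, Q) ≤ √(1 − exp(−D(P‖Q))). -/

import Mathlib

open BigOperators

noncomputable section

/-- The total variation distance `d_TV(P,Q) = (1/2) Σ_x |P(x) − Q(x)|` of finitely supported
distributions. -/
def tvDist {X : Type} [Fintype X] (P Q : X → ℝ) : ℝ :=
  (1 / 2) * ∑ x, |P x - Q x|

/-- The Kullback–Leibler divergence `D(P‖Q) = Σ_{x : P(x) > 0} P(x) log(P(x)/Q(x))`
(natural logarithm) of finitely supported distributions. -/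
def klDiv {X : Type} [Fintype X] (P Q : X → ℝ) : ℝ :=
  ∑ x ∈ Finset.univ.filter (fun x => 0 < P x), P x * Real.log (P x / Q x)

/-- Jensen step: `exp(Σ_{x∈S} w x · log(f x / w x)) ≤ Σ_{x∈S} f x` for weights summing to 1. -/
lemma exp_sum_log_le {X : Type} [Fintype X] (S : Finset X) (w f : X → ℝ)
    (hw : ∀ x ∈ S, 0 < w x) (hw1 : ∑ x ∈ S, w x = 1)
    (hf : ∀ x ∈ S, 0 < f x) :
    Real.exp (∑ x ∈ S, w x * Real.log (f x / w x)) ≤ ∑ x ∈ S, f x := by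
  have h := convexOn_exp.map_sum_le (t := S) (w := w) (p := fun x => Real.log (f x / w x))
    (fun x hx => (hw x hx).le) hw1 (fun x hx => Set.mem_univ _)
  simp only [smul_eq_mul] at h
  refine h.trans_eq ?_
  apply Finset.sum_congr rfl
  intro x hx
  rw [Real.exp_log (div_pos (hf x hx) (hw x hx))]
  field_simp [(hw x hx).ne']

/-- Bretagnolle–Huber inequality:
`d_TV(P,Q) ≤ √(1 − exp(−D(P‖Q)))`. -/
theorem bretagnolle_huber {X : Type} [Fintype X]
    (P Q : X → ℝ)
    (hP : ∀ x, 0 ≤ P x) (hPsum : ∑ x, P x = 1)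
    (hQ : ∀ x, 0 ≤ Q x) (hQsum : ∑ x, Q x = 1)
    (hsupp : ∀ x, 0 < P x → 0 < Q x) :
    tvDist P Q ≤ Real.sqrt (1 - Real.exp (-klDiv P Q)) := by
  set S : Finset X := Finset.univ.filter (fun x => 0 < P x) with hS
  have hmemS : ∀ x ∈ S, 0 < P x := by
    intro x hx; exact (Finset.mem_filter.mp hx).2
  have hw1 : ∑ x ∈ S, P x = 1 := by
    rw [← hPsum]
    apply Finset.sum_subset (Finset.subset_univ S)
    intro x _ hx
    have : ¬ 0 < P x := by
      intro h; exact hx (Finset.mem_filter.mpr ⟨Finset.mem_univ x, h⟩)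
    linarith [hP x]
  set m : X → ℝ := fun x => min (P x) (Q x) with hm
  set M : X → ℝ := fun x => max (P x) (Q x) with hM
  set T : ℝ := tvDist P Q with hT
  -- sums of min and max
  have hsum_add : ∑ x, (m x + M x) = 2 := by
    have : ∀ x, m x + M x = P x + Q x := fun x => min_add_max _ _
    simp only [this, Finset.sum_add_distrib, hPsum, hQsum]; norm_num
  have hsum_sub : ∑ x, (M x - m x) = 2 * T := by
    have : ∀ x, M x - m x = |P x - Q x| := fun x => (max_sub_min_eq_abs _ _).trans (abs_sub_comm _ _)
    simp only [this, hT, tvDist]; ring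
  have hsumM : ∑ x, M x = 1 + T := by
    have h1 : ∑ x, (m x + M x) + ∑ x, (M x - m x) = 2 + 2 * T := by
      rw [hsum_add, hsum_sub]
    rw [← Finset.sum_add_distrib] at h1
    have : ∀ x ∈ Finset.univ, m x + M x + (M x - m x) = 2 * M x := by intros; ring
    rw [Finset.sum_congr rfl this, ← Finset.mul_sum] at h1
    linarith
  have hsumm : ∑ x, m x = 1 - T := by
    have : ∑ x, m x = (∑ x, (m x + M x)) - ∑ x, M x := by
      rw [Finset.sum_add_distrib]; ring
    rw [this, hsum_add, hsumM]; ring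
  have hTnn : 0 ≤ T := by
    have : 0 ≤ ∑ x, |P x - Q x| := Finset.sum_nonneg fun x _ => abs_nonneg _
    rw [hT, tvDist]; linarith
  -- key inequality : exp(-KL) ≤ (1 - T) * (1 + T)
  have hmpos : ∀ x ∈ S, 0 < m x := fun x hx => lt_min (hmemS x hx) (hsupp x (hmemS x hx))
  have hMpos : ∀ x ∈ S, 0 < M x := fun x hx => lt_of_lt_of_le (hmemS x hx) (le_max_left _ _)
  have hsplit : -klDiv P Q =
      (∑ x ∈ S, P x * Real.log (m x / P x)) + (∑ x ∈ S, P x * Real.log (M x / P x)) := by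
    rw [klDiv, ← hS, ← Finset.sum_neg_distrib, ← Finset.sum_add_distrib]
    apply Finset.sum_congr rfl
    intro x hx
    have hPx := hmemS x hx
    have hQx := hsupp x hPx
    have h1 : m x / P x * (M x / P x) = Q x / P x := by
      have hmm : m x * M x = P x * Q x := min_mul_max _ _
      rw [div_mul_div_comm, hmm, mul_div_mul_left _ _ (ne_of_gt hPx)]
    rw [← mul_add, ← Real.log_mul (ne_of_gt (div_pos (hmpos x hx) hPx))
      (ne_of_gt (div_pos (hMpos x hx) hPx)), h1,
      Real.log_div hQx.ne' hPx.ne', Real.log_div hPx.ne' hQx.ne']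
    ring
  have hkey : Real.exp (-klDiv P Q) ≤ (1 - T) * (1 + T) := by
    rw [hsplit, Real.exp_add]
    have h1 : Real.exp (∑ x ∈ S, P x * Real.log (m x / P x)) ≤ ∑ x ∈ S, m x :=
      exp_sum_log_le S P m hmemS hw1 hmpos
    have h2 : Real.exp (∑ x ∈ S, P x * Real.log (M x / P x)) ≤ ∑ x ∈ S, M x :=
      exp_sum_log_le S P M hmemS hw1 hMpos
    have h1' : ∑ x ∈ S, m x ≤ 1 - T := by
      rw [← hsumm]
      apply Finset.sum_le_sum_of_subset_of_nonneg (Finset.subset_univ S)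
      intro x _ _; exact le_min (hP x) (hQ x)
    have h2' : ∑ x ∈ S, M x ≤ 1 + T := by
      rw [← hsumM]
      apply Finset.sum_le_sum_of_subset_of_nonneg (Finset.subset_univ S)
      intro x _ _; exact le_trans (hP x) (le_max_left _ _)
    have hmnn : 0 ≤ ∑ x, m x := Finset.sum_nonneg fun x _ => le_min (hP x) (hQ x)
    exact mul_le_mul (h1.trans h1') (h2.trans h2') (Real.exp_pos _).le
      (by linarith [hsumm])
  have hT2 : T ^ 2 ≤ 1 - Real.exp (-klDiv P Q) := by nlinarith [hkey]
  exact (Real.le_sqrt hTnn (by nlinarith [sq_nonneg T])).mpr hT2
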